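/- Let L be a compact metric space and let ((X_n, α_n))_{n∈ℕ} be a sequence of L-labeled metric spaces such that (i) the collection {X_n : n ∈ ℕ} is uniformly totally bounded, and (ii) for every ε > 0 there exist N ∈ ℕ and δ > 0 such that d_{X_n}(α_n(ℓ), α_n(ℓ')) ≤ ε whenever n ≥ N and d_L(ℓ,ℓ') ≤ δ. Then there exist a subsequence ((X_{n_k}, α_{n_k}))_{k∈ℕ} and an L-labeled metric space (X,α) with α : L → X continuous such that d^L_GH(X_{n_k},α_{n_k};X,α) → 0. -/

import Mathlib

open Filter Topology Metric Set

/-- A `(t,L)`-admissible pseudometric on the disjoint union `X ⊕ Y` of two `L`-labeled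
compact metric spaces `(X, α)` and `(Y, β)`: it is a pseudometric restricting to the
metrics of `X` and `Y`, the Hausdorff distance between `X` and `Y` computed with it is
at most `t`, and `sup_{ℓ ∈ L} d(α ℓ, β ℓ) ≤ t`. -/
def IsAdmissible {L X Y : Type*} [MetricSpace X] [MetricSpace Y]
    (α : L → X) (β : L → Y) (t : ℝ) (d : X ⊕ Y → X ⊕ Y → ℝ) : Prop :=
  (∀ p, d p p = 0) ∧
  (∀ p q, d p q = d q p) ∧
  (∀ p q r, d p r ≤ d p q + d q r) ∧
  (∀ x x' : X, d (Sum.inl x) (Sum.inl x') = dist x x') ∧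
  (∀ y y' : Y, d (Sum.inr y) (Sum.inr y') = dist y y') ∧
  (∀ x : X, ∀ ε > (0 : ℝ), ∃ y : Y, d (Sum.inl x) (Sum.inr y) ≤ t + ε) ∧
  (∀ y : Y, ∀ ε > (0 : ℝ), ∃ x : X, d (Sum.inl x) (Sum.inr y) ≤ t + ε) ∧
  (∀ ℓ : L, d (Sum.inl (α ℓ)) (Sum.inr (β ℓ)) ≤ t)

/-- The labeled Gromov–Hausdorff distance of `(X, α)` and `(Y, β)`. -/
noncomputable def lghDist {L X Y : Type*} [MetricSpace X] [MetricSpace Y]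
    (α : L → X) (β : L → Y) : ℝ :=
  sInf {t : ℝ | 0 ≤ t ∧ ∃ d : X ⊕ Y → X ⊕ Y → ℝ, IsAdmissible α β t d}

lemma lghDist_nonneg {L X Y : Type*} [MetricSpace X] [MetricSpace Y]
    (α : L → X) (β : L → Y) : 0 ≤ lghDist α β :=
  Real.sInf_nonneg (fun _ ht => ht.1)

lemma lghDist_le_of_isometry {L X Y Z : Type*} [MetricSpace X] [MetricSpace Y] [MetricSpace Z]
    (f : X → Z) (g : Y → Z) (hf : Isometry f) (hg : Isometry g)
    (hX : Nonempty X) (hY : Nonempty Y) (hcX : IsCompact (range f)) (hcY : IsCompact (range g))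
    (α : L → X) (β : L → Y) (t : ℝ) (ht : 0 ≤ t)
    (hH : hausdorffDist (range f) (range g) ≤ t)
    (hlab : ∀ ℓ, dist (f (α ℓ)) (g (β ℓ)) ≤ t) :
    lghDist α β ≤ t := by
  have hfin : EMetric.hausdorffEdist (range f) (range g) ≠ ⊤ :=
    hausdorffEdist_ne_top_of_nonempty_of_bounded (range_nonempty f) (range_nonempty g)
      hcX.isBounded hcY.isBounded
  refine csInf_le ⟨0, fun s hs => hs.1⟩ ?_
  refine ⟨ht, fun p q => dist (Sum.elim f g p) (Sum.elim f g q), ?_, ?_, ?_, ?_, ?_, ?_, ?_, ?_⟩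
  · intro p; exact dist_self _
  · intro p q; exact dist_comm _ _
  · intro p q r; exact dist_triangle _ _ _
  · intro x x'; exact hf.dist_eq x x'
  · intro y y'; exact hg.dist_eq y y'
  · intro x ε hε
    have H : hausdorffDist (range f) (range g) < t + ε := lt_of_le_of_lt hH (by linarith)
    obtain ⟨y', hy', hd⟩ := exists_dist_lt_of_hausdorffDist_lt (mem_range_self x) H hfin
    obtain ⟨y, rfl⟩ := hy'
    exact ⟨y, hd.le⟩
  · intro y ε hε
    have H : hausdorffDist (range f) (range g) < t + ε := lt_of_le_of_lt hH (by linarith)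
    obtain ⟨x', hx', hd⟩ := exists_dist_lt_of_hausdorffDist_lt' (mem_range_self y) H hfin
    obtain ⟨x, rfl⟩ := hx'
    exact ⟨x, hd.le⟩
  · intro ℓ; exact hlab ℓ

/-- Extraction of a uniformly convergent subsequence from an asymptotically
equicontinuous sequence of maps into a compact metric space. -/
lemma exists_unif_subseq {L R : Type*} [MetricSpace L] [CompactSpace L]
    [MetricSpace R] [CompactSpace R] [Nonempty R]
    (b : ℕ → L → R)
    (hequi : ∀ ε > (0:ℝ), ∃ N : ℕ, ∃ δ > (0:ℝ), ∀ k ≥ N, ∀ ℓ ℓ', dist ℓ ℓ' ≤ δ →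
      dist (b k ℓ) (b k ℓ') ≤ ε) :
    ∃ ψ : ℕ → ℕ, StrictMono ψ ∧ ∃ β : L → R, Continuous β ∧
      ∀ ε > (0:ℝ), ∃ J, ∀ j ≥ J, ∀ ℓ, dist (b (ψ j) ℓ) (β ℓ) ≤ ε := by
  classical
  by_cases hL : Nonempty L
  swap
  · haveI : IsEmpty L := not_nonempty_iff.1 hL
    refine ⟨id, strictMono_id, fun ℓ => isEmptyElim ℓ, ?_, ?_⟩
    · exact continuous_iff_continuousAt.mpr fun ℓ => isEmptyElim ℓ
    · exact fun ε hε => ⟨0, fun j _ ℓ => isEmptyElim ℓ⟩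
  haveI := hL
  set u : ℕ → L := TopologicalSpace.denseSeq L with hu_def
  have hu : DenseRange u := TopologicalSpace.denseRange_denseSeq L
  obtain ⟨a, ψ, hψ, ha⟩ := CompactSpace.tendsto_subseq (X := ℕ → R) (fun k i => b k (u i))
  have hpt : ∀ i, Tendsto (fun j => b (ψ j) (u i)) atTop (𝓝 (a i)) := by
    intro i
    exact (tendsto_pi_nhds.1 ha) i
  have key : ∀ ε > (0:ℝ), ∃ J, ∀ j ≥ J, ∀ j' ≥ J, ∀ ℓ,
      dist (b (ψ j) ℓ) (b (ψ j') ℓ) ≤ ε := by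
    intro ε hε
    obtain ⟨N, δ, hδ, hN⟩ := hequi (ε/4) (by positivity)
    have hcover : (univ : Set L) ⊆ ⋃ i : ℕ, ball (u i) δ := by
      intro ℓ _
      obtain ⟨i, hi⟩ := hu.exists_dist_lt ℓ hδ
      exact mem_iUnion.2 ⟨i, by simpa [mem_ball, dist_comm] using hi⟩
    obtain ⟨I, hI⟩ := isCompact_univ.elim_finite_subcover (fun i => ball (u i) δ)
      (fun i => isOpen_ball) hcover
    choose Ji hJi using fun i : ℕ =>
      Metric.tendsto_atTop.1 (hpt i) (ε/4) (by positivity)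
    refine ⟨max N (I.sup Ji), ?_⟩
    intro j hj j' hj' ℓ
    obtain ⟨i, hiI, hiℓ⟩ : ∃ i ∈ I, ℓ ∈ ball (u i) δ := by
      simpa using hI (mem_univ ℓ)
    have hjN : ∀ {m : ℕ}, m ≥ max N (I.sup Ji) → ψ m ≥ N :=
      fun {m} hm => le_trans (le_trans (le_max_left _ _) hm) hψ.le_apply
    have hdℓ : dist ℓ (u i) ≤ δ := (mem_ball.1 hiℓ).le
    have h1 : dist (b (ψ j) ℓ) (b (ψ j) (u i)) ≤ ε/4 := hN _ (hjN hj) _ _ hdℓ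
    have h1' : dist (b (ψ j') ℓ) (b (ψ j') (u i)) ≤ ε/4 := hN _ (hjN hj') _ _ hdℓ
    have hji : Ji i ≤ max N (I.sup Ji) := le_trans (Finset.le_sup hiI) (le_max_right _ _)
    have h2 : dist (b (ψ j) (u i)) (b (ψ j') (u i)) ≤ ε/2 := by
      have e1 := hJi i j (le_trans hji hj)
      have e2 := hJi i j' (le_trans hji hj')
      calc dist (b (ψ j) (u i)) (b (ψ j') (u i))
          ≤ dist (b (ψ j) (u i)) (a i) + dist (a i) (b (ψ j') (u i)) := dist_triangle _ _ _
        _ ≤ ε/4 + ε/4 := by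
            rw [dist_comm (a i)]
            exact add_le_add e1.le e2.le
        _ = ε/2 := by ring
    calc dist (b (ψ j) ℓ) (b (ψ j') ℓ)
        ≤ dist (b (ψ j) ℓ) (b (ψ j) (u i)) + dist (b (ψ j) (u i)) (b (ψ j') (u i))
            + dist (b (ψ j') (u i)) (b (ψ j') ℓ) := dist_triangle4 _ _ _ _
      _ ≤ ε/4 + ε/2 + ε/4 := by
          refine add_le_add (add_le_add h1 h2) ?_
          rw [dist_comm]; exact h1'
      _ = ε := by ring
  have hCauchy : ∀ ℓ, CauchySeq (fun j => b (ψ j) ℓ) := by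
    intro ℓ
    rw [Metric.cauchySeq_iff]
    intro ε hε
    obtain ⟨J, hJ⟩ := key (ε/2) (half_pos hε)
    exact ⟨J, fun m hm n hn => lt_of_le_of_lt (hJ m hm n hn ℓ) (by linarith)⟩
  choose β hβ using fun ℓ => cauchySeq_tendsto_of_complete (hCauchy ℓ)
  have hunif : ∀ ε > (0:ℝ), ∃ J, ∀ j ≥ J, ∀ ℓ, dist (b (ψ j) ℓ) (β ℓ) ≤ ε := by
    intro ε hε
    obtain ⟨J, hJ⟩ := key ε hε
    refine ⟨J, fun j hj ℓ => ?_⟩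
    have hlim : Tendsto (fun j' => dist (b (ψ j) ℓ) (b (ψ j') ℓ)) atTop
        (𝓝 (dist (b (ψ j) ℓ) (β ℓ))) := tendsto_const_nhds.dist (hβ ℓ)
    exact le_of_tendsto hlim (eventually_atTop.2 ⟨J, fun j' hj' => hJ j hj j' hj' ℓ⟩)
  have hcont : Continuous β := by
    rw [Metric.continuous_iff]
    intro ℓ ε hε
    obtain ⟨N, δ, hδ, hN⟩ := hequi (ε/4) (by positivity)
    obtain ⟨J, hJ⟩ := hunif (ε/4) (by positivity)
    refine ⟨δ, hδ, fun ℓ' hℓ' => ?_⟩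
    set j := max N J with hj_def
    have hjN : ψ j ≥ N := le_trans (le_max_left _ _) hψ.le_apply
    have h1 : dist (β ℓ') (b (ψ j) ℓ') ≤ ε/4 := by
      rw [dist_comm]; exact hJ j (le_max_right _ _) ℓ'
    have h2 : dist (b (ψ j) ℓ') (b (ψ j) ℓ) ≤ ε/4 := hN _ hjN _ _ hℓ'.le
    have h3 : dist (b (ψ j) ℓ) (β ℓ) ≤ ε/4 := hJ j (le_max_right _ _) ℓ
    calc dist (β ℓ') (β ℓ)
        ≤ dist (β ℓ') (b (ψ j) ℓ') + dist (b (ψ j) ℓ') (b (ψ j) ℓ) + dist (b (ψ j) ℓ) (β ℓ) :=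
          dist_triangle4 _ _ _ _
      _ ≤ ε/4 + ε/4 + ε/4 := add_le_add (add_le_add h1 h2) h3
      _ < ε := by linarith
  exact ⟨ψ, hψ, β, hcont, hunif⟩


/-- A bundled `L`-labeled compact metric space: a compact metric space together with a
labeling `L → carrier`. -/
structure LabeledSpace (L : Type*) where
  carrier : Type*
  [ms : MetricSpace carrier]
  [cs : CompactSpace carrier]
  label : L → carrier

attribute [instance] LabeledSpace.ms LabeledSpace.cs

open GromovHausdorff in
lemma stmt14_aux {L : Type*} [MetricSpace L] [CompactSpace L] (A : ℕ → LabeledSpace L)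
    [inst : ∀ n, Nonempty (A n).carrier]
    (hdiam : ∃ D > (0 : ℝ), ∀ n, ∀ x y : (A n).carrier, dist x y ≤ D)
    (hnet : ∀ ε > (0 : ℝ), ∃ N : ℕ, ∀ n, ∃ s : Finset (A n).carrier,
      s.card ≤ N ∧ ∀ x : (A n).carrier, ∃ y ∈ s, dist x y ≤ ε)
    (hequi : ∀ ε > (0 : ℝ), ∃ (N : ℕ) (δ : ℝ), 0 < δ ∧
      ∀ n ≥ N, ∀ ℓ ℓ' : L, dist ℓ ℓ' ≤ δ → dist ((A n).label ℓ) ((A n).label ℓ') ≤ ε) :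
    ∃ φ : ℕ → ℕ, StrictMono φ ∧
      ∃ B : LabeledSpace L, Continuous B.label ∧
        Filter.Tendsto (fun k => lghDist (A (φ k)).label B.label)
          Filter.atTop (nhds 0) := by
  classical
  obtain ⟨D, hD, hDle⟩ := hdiam
  set p : ℕ → GHSpace := fun n => toGHSpace (A n).carrier with hp
  choose K hK using fun m : ℕ => hnet (1/((m:ℝ)+1)) (by positivity)
  have hiso : ∀ n, Nonempty ((p n).Rep ≃ᵢ (A n).carrier) := by
    intro n
    rw [← toGHSpace_eq_toGHSpace_iff_isometryEquiv, GHSpace.toGHSpace_rep]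
  have htb : TotallyBounded (range p) := by
    refine GromovHausdorff.totallyBounded (u := fun m => 2/((m:ℝ)+1)) (K := K) (C := D)
      ?_ ?_ ?_
    · have h2 := tendsto_one_div_add_atTop_nhds_zero_nat.const_mul (2:ℝ)
      simpa [mul_one_div, div_eq_mul_inv] using h2
    · rintro q ⟨n, rfl⟩
      obtain ⟨e⟩ := hiso n
      refine diam_le_of_forall_dist_le hD.le (fun x _ y _ => ?_)
      rw [← e.dist_eq x y]
      exact hDle n _ _
    · rintro q ⟨n, rfl⟩ m
      obtain ⟨e⟩ := hiso n
      obtain ⟨s, hs_card, hs_net⟩ := hK m n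
      refine ⟨↑(s.image e.symm), ?_, ?_⟩
      · exact (Cardinal.mk_coe_finset (s := Finset.image e.symm s)).trans_le
          (Nat.cast_le.2 (le_trans Finset.card_image_le hs_card))
      · intro x _
        obtain ⟨y, hy, hxy⟩ := hs_net (e x)
        refine mem_iUnion₂.2 ⟨e.symm y, Finset.mem_coe.2 (Finset.mem_image_of_mem _ hy), ?_⟩
        rw [mem_ball]
        have hxey : dist x (e.symm y) = dist (e x) y := by
          calc dist x (e.symm y) = dist (e x) (e (e.symm y)) := (e.dist_eq _ _).symm
            _ = dist (e x) y := by rw [e.apply_symm_apply]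
        rw [hxey]
        have h2 : 2/((m:ℝ)+1) = 1/((m:ℝ)+1) + 1/((m:ℝ)+1) := by ring
        have h3 : (0:ℝ) < 1/((m:ℝ)+1) := by positivity
        linarith
  obtain ⟨q, hq, φ₁, hφ₁, hconv⟩ :=
    (TotallyBounded.isCompact_of_isClosed htb.closure isClosed_closure).tendsto_subseq
      (x := p) (fun n => subset_closure (mem_range_self n))
  have hgh : ∀ n, ghDist (A n).carrier q.Rep = dist (p n) q := by
    intro n
    rw [GromovHausdorff.ghDist, GHSpace.toGHSpace_rep]
  have ht0 : Tendsto (fun k => dist (p (φ₁ k)) q) atTop (𝓝 0) :=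
    tendsto_iff_dist_tendsto_zero.1 hconv
  have ht1 : Tendsto (fun k => dist (p (φ₁ k)) q + 1/((k:ℝ)+1)) atTop (𝓝 0) := by
    simpa using ht0.add tendsto_one_div_add_atTop_nhds_zero_nat
  have hfincpl : ∀ k : ℕ, EMetric.hausdorffEdist
      (range (optimalGHInjl (A (φ₁ k)).carrier q.Rep))
      (range (optimalGHInjr (A (φ₁ k)).carrier q.Rep)) ≠ ⊤ := fun k =>
    hausdorffEdist_ne_top_of_nonempty_of_bounded (range_nonempty _) (range_nonempty _)
      (isCompact_range (isometry_optimalGHInjl _ _).continuous).isBounded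
      (isCompact_range (isometry_optimalGHInjr _ _).continuous).isBounded
  have Hlab : ∀ k : ℕ, ∀ ℓ : L, ∃ y : q.Rep,
      dist (optimalGHInjl (A (φ₁ k)).carrier q.Rep ((A (φ₁ k)).label ℓ))
        (optimalGHInjr (A (φ₁ k)).carrier q.Rep y)
        < dist (p (φ₁ k)) q + 1/((k:ℝ)+1) := by
    intro k ℓ
    have hpos : (0:ℝ) < 1/((k:ℝ)+1) := by positivity
    have hlt : hausdorffDist (range (optimalGHInjl (A (φ₁ k)).carrier q.Rep))
        (range (optimalGHInjr (A (φ₁ k)).carrier q.Rep))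
        < dist (p (φ₁ k)) q + 1/((k:ℝ)+1) := by
      rw [hausdorffDist_optimal, hgh]
      linarith
    obtain ⟨y', hy', hd⟩ := exists_dist_lt_of_hausdorffDist_lt (mem_range_self _) hlt
      (hfincpl k)
    obtain ⟨y, rfl⟩ := hy'
    exact ⟨y, hd⟩
  choose b hb using Hlab
  have hbequi : ∀ ε > (0:ℝ), ∃ N : ℕ, ∃ δ > (0:ℝ), ∀ k ≥ N, ∀ ℓ ℓ',
      dist ℓ ℓ' ≤ δ → dist (b k ℓ) (b k ℓ') ≤ ε := by
    intro ε hε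
    obtain ⟨N₁, δ, hδ, hN₁⟩ := hequi (ε/3) (by positivity)
    obtain ⟨N₂, hN₂⟩ := Metric.tendsto_atTop.1 ht1 (ε/3) (by positivity)
    refine ⟨max N₁ N₂, δ, hδ, ?_⟩
    intro k hk ℓ ℓ' hll
    have hk1 : N₁ ≤ φ₁ k := le_trans (le_trans (le_max_left _ _) hk) hφ₁.le_apply
    have hk2 : dist (p (φ₁ k)) q + 1/((k:ℝ)+1) < ε/3 := by
      have h := hN₂ k (le_trans (le_max_right _ _) hk)
      have hnn : 0 ≤ dist (p (φ₁ k)) q + 1/((k:ℝ)+1) := by positivity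
      rwa [Real.dist_eq, sub_zero, abs_of_nonneg hnn] at h
    have e1 := hb k ℓ
    have e2 := hb k ℓ'
    have e3 : dist ((A (φ₁ k)).label ℓ) ((A (φ₁ k)).label ℓ') ≤ ε/3 := hN₁ _ hk1 _ _ hll
    have hiso_r : dist (b k ℓ) (b k ℓ') =
        dist (optimalGHInjr (A (φ₁ k)).carrier q.Rep (b k ℓ))
          (optimalGHInjr (A (φ₁ k)).carrier q.Rep (b k ℓ')) :=
      ((isometry_optimalGHInjr _ _).dist_eq _ _).symm
    have hiso_l : dist (optimalGHInjl (A (φ₁ k)).carrier q.Rep ((A (φ₁ k)).label ℓ))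
        (optimalGHInjl (A (φ₁ k)).carrier q.Rep ((A (φ₁ k)).label ℓ'))
        = dist ((A (φ₁ k)).label ℓ) ((A (φ₁ k)).label ℓ') :=
      (isometry_optimalGHInjl _ _).dist_eq _ _
    rw [hiso_r]
    calc dist (optimalGHInjr (A (φ₁ k)).carrier q.Rep (b k ℓ))
          (optimalGHInjr (A (φ₁ k)).carrier q.Rep (b k ℓ'))
        ≤ dist (optimalGHInjr (A (φ₁ k)).carrier q.Rep (b k ℓ))
            (optimalGHInjl (A (φ₁ k)).carrier q.Rep ((A (φ₁ k)).label ℓ))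
          + dist (optimalGHInjl (A (φ₁ k)).carrier q.Rep ((A (φ₁ k)).label ℓ))
            (optimalGHInjl (A (φ₁ k)).carrier q.Rep ((A (φ₁ k)).label ℓ'))
          + dist (optimalGHInjl (A (φ₁ k)).carrier q.Rep ((A (φ₁ k)).label ℓ'))
            (optimalGHInjr (A (φ₁ k)).carrier q.Rep (b k ℓ')) := dist_triangle4 _ _ _ _
      _ ≤ ε/3 + ε/3 + ε/3 := by
          refine add_le_add (add_le_add ?_ ?_) ?_
          · rw [dist_comm]; exact le_of_lt (lt_of_lt_of_le e1 hk2.le)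
          · rw [hiso_l]; exact e3
          · exact le_of_lt (lt_of_lt_of_le e2 hk2.le)
      _ = ε := by ring
  obtain ⟨ψ, hψ, β, hβcont, hβconv⟩ := exists_unif_subseq b hbequi
  have hup : Isometry (ULift.up : q.Rep → ULift q.Rep) := Isometry.of_dist_eq fun _ _ => rfl
  refine ⟨fun j => φ₁ (ψ j), hφ₁.comp hψ, ⟨ULift q.Rep, fun ℓ => ULift.up (β ℓ)⟩,
    hup.continuous.comp hβcont, ?_⟩
  rw [Metric.tendsto_atTop]
  intro ε hε
  obtain ⟨J₁, hJ₁⟩ := Metric.tendsto_atTop.1 ht1 (ε/4) (by positivity)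
  obtain ⟨J₂, hJ₂⟩ := hβconv (ε/4) (by positivity)
  refine ⟨max J₁ J₂, fun j hj => ?_⟩
  have hk1 : J₁ ≤ ψ j := le_trans (le_trans (le_max_left _ _) hj) hψ.le_apply
  have hsmall : dist (p (φ₁ (ψ j))) q + 1/((ψ j:ℝ)+1) < ε/4 := by
    have h := hJ₁ (ψ j) hk1
    have hnn : 0 ≤ dist (p (φ₁ (ψ j))) q + 1/((ψ j:ℝ)+1) := by positivity
    rwa [Real.dist_eq, sub_zero, abs_of_nonneg hnn] at h
  have hlab2 : ∀ ℓ : L,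
      dist (optimalGHInjl (A (φ₁ (ψ j))).carrier q.Rep ((A (φ₁ (ψ j))).label ℓ))
        (optimalGHInjr (A (φ₁ (ψ j))).carrier q.Rep (β ℓ)) ≤ ε/2 := by
    intro ℓ
    have h1 := hb (ψ j) ℓ
    have h2 : dist (b (ψ j) ℓ) (β ℓ) ≤ ε/4 := hJ₂ j (le_trans (le_max_right _ _) hj) ℓ
    calc dist (optimalGHInjl (A (φ₁ (ψ j))).carrier q.Rep ((A (φ₁ (ψ j))).label ℓ))
          (optimalGHInjr (A (φ₁ (ψ j))).carrier q.Rep (β ℓ))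
        ≤ dist (optimalGHInjl (A (φ₁ (ψ j))).carrier q.Rep ((A (φ₁ (ψ j))).label ℓ))
            (optimalGHInjr (A (φ₁ (ψ j))).carrier q.Rep (b (ψ j) ℓ))
          + dist (optimalGHInjr (A (φ₁ (ψ j))).carrier q.Rep (b (ψ j) ℓ))
            (optimalGHInjr (A (φ₁ (ψ j))).carrier q.Rep (β ℓ)) := dist_triangle _ _ _
      _ ≤ ε/4 + ε/4 := by
          refine add_le_add (le_of_lt (lt_of_lt_of_le h1 hsmall.le)) ?_
          rw [(isometry_optimalGHInjr _ _).dist_eq]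
          exact h2
      _ = ε/2 := by ring
  have hgh2 : hausdorffDist (range (optimalGHInjl (A (φ₁ (ψ j))).carrier q.Rep))
      (range (optimalGHInjr (A (φ₁ (ψ j))).carrier q.Rep)) ≤ ε/2 := by
    rw [hausdorffDist_optimal, hgh]
    have hnn : 0 ≤ 1/((ψ j:ℝ)+1) := by positivity
    linarith
  have hrangeg : range (fun y : ULift q.Rep =>
      optimalGHInjr (A (φ₁ (ψ j))).carrier q.Rep y.down)
      = range (optimalGHInjr (A (φ₁ (ψ j))).carrier q.Rep) :=
    ULift.down_surjective.range_comp
      (optimalGHInjr (A (φ₁ (ψ j))).carrier q.Rep)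
  have hle : lghDist (A (φ₁ (ψ j))).label (fun ℓ => ULift.up (β ℓ)) ≤ ε/2 := by
    refine lghDist_le_of_isometry (optimalGHInjl (A (φ₁ (ψ j))).carrier q.Rep)
      (fun y : ULift q.Rep => optimalGHInjr (A (φ₁ (ψ j))).carrier q.Rep y.down)
      (isometry_optimalGHInjl _ _)
      ((isometry_optimalGHInjr _ _).comp (Isometry.of_dist_eq fun _ _ => rfl))
      (inst _) inferInstance
      (isCompact_range (isometry_optimalGHInjl _ _).continuous)
      ?_ _ _ (ε/2) (by linarith) ?_ ?_
    · rw [hrangeg]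
      exact isCompact_range (isometry_optimalGHInjr _ _).continuous
    · rw [hrangeg]
      exact hgh2
    · exact fun ℓ => hlab2 ℓ
  rw [Real.dist_eq, sub_zero, abs_of_nonneg (lghDist_nonneg _ _)]
  exact lt_of_le_of_lt hle (by linarith)

/-- Precompactness for compact label spaces: let `L` be a compact metric space and let
`(Xₙ, αₙ)` be a sequence of `L`-labeled compact metric spaces such that (i) the spaces
`Xₙ` are uniformly totally bounded and (ii) `d(αₙ ℓ, αₙ ℓ') → 0` as `n → ∞` and
`d_L(ℓ, ℓ') → 0`. Then some subsequence converges in the labeled Gromov–Hausdorff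
distance to an `L`-labeled compact metric space whose labeling is continuous. -/
theorem stmt14 {L : Type*} [MetricSpace L] [CompactSpace L] (A : ℕ → LabeledSpace L)
    (hdiam : ∃ D > (0 : ℝ), ∀ n, ∀ x y : (A n).carrier, dist x y ≤ D)
    (hnet : ∀ ε > (0 : ℝ), ∃ N : ℕ, ∀ n, ∃ s : Finset (A n).carrier,
      s.card ≤ N ∧ ∀ x : (A n).carrier, ∃ y ∈ s, dist x y ≤ ε)
    (hequi : ∀ ε > (0 : ℝ), ∃ (N : ℕ) (δ : ℝ), 0 < δ ∧
      ∀ n ≥ N, ∀ ℓ ℓ' : L, dist ℓ ℓ' ≤ δ → dist ((A n).label ℓ) ((A n).label ℓ') ≤ ε) :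
    ∃ φ : ℕ → ℕ, StrictMono φ ∧
      ∃ B : LabeledSpace L, Continuous B.label ∧
        Filter.Tendsto (fun k => lghDist (A (φ k)).label B.label)
          Filter.atTop (nhds 0) := by
  classical
  by_cases hfin : ∃ N : ℕ, ∀ n ≥ N, Nonempty (A n).carrier
  · obtain ⟨N₀, hN₀⟩ := hfin
    haveI inst : ∀ n : ℕ, Nonempty ((fun n => A (n + N₀)) n).carrier :=
      fun n => hN₀ (n + N₀) (Nat.le_add_left _ _)
    obtain ⟨D, hD, hDle⟩ := hdiam
    obtain ⟨φ', hφ', B, hB, hT⟩ := stmt14_aux (fun n => A (n + N₀))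
      ⟨D, hD, fun n => hDle (n + N₀)⟩
      (fun ε hε => (hnet ε hε).imp (fun N h => fun n => h (n + N₀)))
      (fun ε hε => by
        obtain ⟨N, δ, hδ, h⟩ := hequi ε hε
        exact ⟨N, δ, hδ, fun n hn => h (n + N₀) (le_trans hn (Nat.le_add_right _ _))⟩)
    exact ⟨fun j => φ' j + N₀, fun a b h => Nat.add_lt_add_right (hφ' h) _, B, hB, hT⟩
  · push_neg at hfin
    haveI hLempty : IsEmpty L := by
      by_contra h
      rw [not_isEmpty_iff] at h
      obtain ⟨n, _, hne⟩ := hfin 0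
      exact hne.false ((A n).label h.some)
    have hstep : ∀ N : ℕ, ∃ n, N ≤ n ∧ IsEmpty (A n).carrier := by
      intro N
      obtain ⟨n, hn, hne⟩ := hfin N
      exact ⟨n, hn, hne⟩
    choose f hf1 hf2 using hstep
    set φ : ℕ → ℕ := fun k => Nat.rec (f 0) (fun _ prev => f (prev + 1)) k with hφdef
    have hφs : StrictMono φ :=
      strictMono_nat_of_lt_succ (fun k => lt_of_lt_of_le (Nat.lt_succ_self _) (hf1 (φ k + 1)))
    have hφe : ∀ k, IsEmpty (A (φ k)).carrier := by
      intro k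
      cases k with
      | zero => exact hf2 0
      | succ k => exact hf2 _
    refine ⟨φ, hφs, ⟨ULift Empty, fun ℓ => isEmptyElim ℓ⟩,
      continuous_iff_continuousAt.mpr (fun ℓ => isEmptyElim ℓ), ?_⟩
    have hzero : ∀ k, lghDist (A (φ k)).label
        ((⟨ULift Empty, fun ℓ => isEmptyElim ℓ⟩ : LabeledSpace L).label) = 0 := by
      intro k
      haveI := hφe k
      refine le_antisymm ?_ (lghDist_nonneg _ _)
      refine csInf_le ⟨0, fun s hs => hs.1⟩ ?_
      refine ⟨le_refl 0, fun _ _ => 0, fun p => rfl, fun p q => rfl,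
        fun p q r => by norm_num, fun x => isEmptyElim x, fun y => isEmptyElim y,
        fun x => isEmptyElim x, fun y => isEmptyElim y, fun ℓ => isEmptyElim ℓ⟩
    have heq : (fun k => lghDist (A (φ k)).label
        ((⟨ULift Empty, fun ℓ => isEmptyElim ℓ⟩ : LabeledSpace L).label)) = fun _ => (0:ℝ) :=
      funext hzero
    rw [heq]
    exact tendsto_const_nhds
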